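/- Weak modal refinement is compositional with respect to synchronous composition: if S' ≤_m* S, T' ≤_m* T, and S and T are composable, then S' and T' are composable and S' ⊗_sy T' ≤_m* S ⊗_sy T. -/

import Mathlib

/-- A modal I/O-transition system (MIO): states, an initial state, a signature of
input, output and internal actions (pairwise disjoint subsets of the action
universe `A`), may-transitions and must-transitions with must ⊆ may. -/
structure MIO (A : Type) where
  State : Type
  start : State
  inp : Set A
  out : Set A
  intl : Set A
  may : State → A → State → Prop
  must : State → A → State → Prop
  inp_out : ∀ a, a ∈ inp → a ∈ out → False
  inp_intl : ∀ a, a ∈ inp → a ∈ intl → False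
  out_intl : ∀ a, a ∈ out → a ∈ intl → False
  must_sub : ∀ s a s', must s a s' → may s a s'

namespace MIO

variable {A B : Type}

/-- The set of all actions of a MIO. -/
def act (S : MIO A) : Set A := S.inp ∪ S.out ∪ S.intl

/-- Two MIOs have the same signature. -/
def SigEq (S T : MIO A) : Prop := S.inp = T.inp ∧ S.out = T.out ∧ S.intl = T.intl

/-- Strong modal refinement `S ≤_m T`. -/
def StrongRefines (S T : MIO A) : Prop :=
  SigEq S T ∧
  ∃ R : S.State → T.State → Prop, R S.start T.start ∧
    ∀ s t, R s t →
      (∀ a t', T.must t a t' → ∃ s', S.must s a s' ∧ R s' t') ∧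
      (∀ a s', S.may s a s' → ∃ t', T.may t a t' ∧ R s' t')

/-- One internal must-transition. -/
def tauMust (S : MIO A) (s s' : S.State) : Prop := ∃ a ∈ S.intl, S.must s a s'

/-- Finitely many (possibly zero) internal must-transitions. -/
def tauMustStar (S : MIO A) : S.State → S.State → Prop := Relation.ReflTransGen S.tauMust

/-- One internal may-transition. -/
def tauMay (S : MIO A) (s s' : S.State) : Prop := ∃ a ∈ S.intl, S.may s a s'

/-- Finitely many (possibly zero) internal may-transitions. -/
def tauMayStar (S : MIO A) : S.State → S.State → Prop := Relation.ReflTransGen S.tauMay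

/-- Weak modal refinement `S ≤_m* T`. -/
def WeakRefines (S T : MIO A) : Prop :=
  SigEq S T ∧
  ∃ R : S.State → T.State → Prop, R S.start T.start ∧
    ∀ s t, R s t →
      (∀ a ∈ T.inp ∪ T.out, ∀ t', T.must t a t' →
        ∃ s1 s2 s', S.tauMustStar s s1 ∧ S.must s1 a s2 ∧ S.tauMustStar s2 s' ∧ R s' t') ∧
      (∀ a ∈ T.intl, ∀ t', T.must t a t' → ∃ s', S.tauMustStar s s' ∧ R s' t') ∧
      (∀ a ∈ S.inp ∪ S.out, ∀ s', S.may s a s' →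
        ∃ t1 t2 t', T.tauMayStar t t1 ∧ T.may t1 a t2 ∧ T.tauMayStar t2 t' ∧ R s' t') ∧
      (∀ a ∈ S.intl, ∀ s', S.may s a s' → ∃ t', T.tauMayStar t t' ∧ R s' t')

/-- Shared actions of two MIOs. -/
def shared (S T : MIO A) : Set A := S.act ∩ T.act

/-- Two MIOs are (syntactically) composable if their actions overlap only on
complementary types. -/
def Composable (S T : MIO A) : Prop :=
  shared S T ⊆ (S.inp ∩ T.out) ∪ (T.inp ∩ S.out)

/-- Synchronous composition `S ⊗_sy T` of composable MIOs. -/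
def syncComp (S T : MIO A) (_h : Composable S T) : MIO A where
  State := S.State × T.State
  start := (S.start, T.start)
  inp := (S.inp ∪ T.inp) \ shared S T
  out := (S.out ∪ T.out) \ shared S T
  intl := S.intl ∪ T.intl ∪ shared S T
  may p a p' :=
    (a ∈ shared S T ∧ S.may p.1 a p'.1 ∧ T.may p.2 a p'.2) ∨
    (a ∈ S.act ∧ a ∉ shared S T ∧ S.may p.1 a p'.1 ∧ p'.2 = p.2) ∨
    (a ∈ T.act ∧ a ∉ shared S T ∧ T.may p.2 a p'.2 ∧ p'.1 = p.1)
  must p a p' :=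
    (a ∈ shared S T ∧ S.must p.1 a p'.1 ∧ T.must p.2 a p'.2) ∨
    (a ∈ S.act ∧ a ∉ shared S T ∧ S.must p.1 a p'.1 ∧ p'.2 = p.2) ∨
    (a ∈ T.act ∧ a ∉ shared S T ∧ T.must p.2 a p'.2 ∧ p'.1 = p.1)
  inp_out := by
    intro a ha hb
    have h1 := S.inp_out a; have h2 := T.inp_out a
    simp only [Set.mem_diff, Set.mem_union, shared, act, Set.mem_inter_iff] at ha hb
    tauto
  inp_intl := by
    intro a ha hb
    have h1 := S.inp_intl a; have h2 := T.inp_intl a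
    simp only [Set.mem_diff, Set.mem_union, shared, act, Set.mem_inter_iff] at ha hb
    tauto
  out_intl := by
    intro a ha hb
    have h1 := S.out_intl a; have h2 := T.out_intl a
    simp only [Set.mem_diff, Set.mem_union, shared, act, Set.mem_inter_iff] at ha hb
    tauto
  must_sub := by
    rintro p a p' (⟨h1, h2, h3⟩ | ⟨h1, h2, h3, h4⟩ | ⟨h1, h2, h3, h4⟩)
    · exact Or.inl ⟨h1, S.must_sub _ _ _ h2, T.must_sub _ _ _ h3⟩
    · exact Or.inr (Or.inl ⟨h1, h2, S.must_sub _ _ _ h3, h4⟩)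
    · exact Or.inr (Or.inr ⟨h1, h2, T.must_sub _ _ _ h3, h4⟩)

/-- Reachability (w.r.t. may-transitions) from the initial state. -/
def Reachable (M : MIO A) (s : M.State) : Prop :=
  Relation.ReflTransGen (fun x y => ∃ a, M.may x a y) M.start s

/-- Strong modal compatibility `S ⇄_sc T`. -/
def StrongCompat (S T : MIO A) : Prop :=
  ∃ h : Composable S T,
    ∀ p : S.State × T.State, (syncComp S T h).Reachable p →
      (∀ a ∈ S.out ∩ T.inp, ∀ s', S.may p.1 a s' → ∃ t', T.must p.2 a t') ∧
      (∀ a ∈ T.out ∩ S.inp, ∀ t', T.may p.2 a t' → ∃ s', S.must p.1 a s')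

/-- Weak modal compatibility `S ⇄_wc T`. -/
def WeakCompat (S T : MIO A) : Prop :=
  ∃ h : Composable S T,
    ∀ p : S.State × T.State, (syncComp S T h).Reachable p →
      (∀ a ∈ S.out ∩ T.inp, ∀ s', S.may p.1 a s' →
        ∃ t1 t', T.tauMustStar p.2 t1 ∧ T.must t1 a t') ∧
      (∀ a ∈ T.out ∩ S.inp, ∀ t', T.may p.2 a t' →
        ∃ s1 s', S.tauMustStar p.1 s1 ∧ S.must s1 a s')

/-- Finite executions: `Trace M s as s'` means `M` can go from `s` to `s'` by
a sequence of may-transitions labelled by the list of actions `as`. -/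
inductive Trace (M : MIO A) : M.State → List A → M.State → Prop
  | nil (s : M.State) : Trace M s [] s
  | cons {s s' s'' : M.State} {a : A} {as : List A} :
      M.may s a s' → Trace M s' as s'' → Trace M s (a :: as) s''

/-- Renaming the actions of a MIO along an injective function. -/
def rename (f : A → B) (hf : Function.Injective f) (S : MIO A) : MIO B where
  State := S.State
  start := S.start
  inp := f '' S.inp
  out := f '' S.out
  intl := f '' S.intl
  may s b s' := ∃ a, b = f a ∧ S.may s a s'
  must s b s' := ∃ a, b = f a ∧ S.must s a s'
  inp_out := by
    rintro b ⟨a1, h1, rfl⟩ ⟨a2, h2, heq⟩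
    obtain rfl := hf heq
    exact S.inp_out a2 h1 h2
  inp_intl := by
    rintro b ⟨a1, h1, rfl⟩ ⟨a2, h2, heq⟩
    obtain rfl := hf heq
    exact S.inp_intl a2 h1 h2
  out_intl := by
    rintro b ⟨a1, h1, rfl⟩ ⟨a2, h2, heq⟩
    obtain rfl := hf heq
    exact S.out_intl a2 h1 h2
  must_sub := by
    rintro s b s' ⟨a, rfl, h⟩
    exact ⟨a, rfl, S.must_sub _ _ _ h⟩

-- Tagging function: actions in `o` become the fresh "queue input" actions `n^▷`
-- (encoded as `Sum.inr n`), all other actions are kept (as `Sum.inl a`).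
open Classical in
noncomputable def tagged (o : Set A) : A → A ⊕ A :=
  fun a => if a ∈ o then Sum.inr a else Sum.inl a

theorem tagged_injective (o : Set A) : Function.Injective (tagged o) := by
  classical
  intro a b h
  by_cases ha : a ∈ o <;> by_cases hb : b ∈ o <;>
    simp [tagged, ha, hb] at h <;> tauto

/-- The queue MIO `Q_o`: a FIFO buffer for messages in `o`. States are finite
strings over `A` (with reachable states being strings over `o`), inputs are the
tagged actions `n^▷ = Sum.inr n`, outputs the actions `n = Sum.inl n` for `n ∈ o`.
Enqueue at the front, dequeue from the back; may- and must-transitions coincide. -/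
def queueMIO (o : Set A) : MIO (A ⊕ A) where
  State := List A
  start := []
  inp := Sum.inr '' o
  out := Sum.inl '' o
  intl := ∅
  may s b s' :=
    (∃ n ∈ o, b = Sum.inr n ∧ s' = n :: s) ∨ (∃ n ∈ o, b = Sum.inl n ∧ s = s' ++ [n])
  must s b s' :=
    (∃ n ∈ o, b = Sum.inr n ∧ s' = n :: s) ∨ (∃ n ∈ o, b = Sum.inl n ∧ s = s' ++ [n])
  inp_out := by rintro b ⟨n, hn, rfl⟩ ⟨m, hm, h⟩; simp at h
  inp_intl := by rintro b _ h; simp at h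
  out_intl := by rintro b _ h; simp at h
  must_sub := fun _ _ _ h => h

theorem omega_composable (o : Set A) (S : MIO A) (ho : o ⊆ S.out) :
    Composable (rename (tagged o) (tagged_injective o) S) (queueMIO o) := by
  classical
  rintro b ⟨hb1, hb2⟩
  have hq : (∃ n ∈ o, Sum.inr n = b) ∨ (∃ n ∈ o, Sum.inl n = b) := by
    simpa [queueMIO, act, Set.image, Set.mem_union] using hb2
  have hr : ∃ a, ((a ∈ S.inp ∨ a ∈ S.out) ∨ a ∈ S.intl) ∧ tagged o a = b := by
    simpa [rename, act, ← Set.image_union] using hb1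
  obtain ⟨a, _, ha⟩ := hr
  rcases hq with ⟨n, hn, hb⟩ | ⟨n, hn, hb⟩
  · right
    constructor
    · exact ⟨n, hn, hb⟩
    · refine ⟨n, ho hn, ?_⟩
      rw [← hb]; simp [tagged, hn]
  · exfalso
    rw [← hb] at ha
    by_cases h : a ∈ o
    · simp [tagged, h] at ha
    · simp [tagged, h] at ha
      exact h (ha ▸ hn)

/-- `Ω_o(S)`: the MIO `S` with an output queue for `o ⊆ out_S`, i.e. the
synchronous product of the renamed MIO `S_o^▷` with the queue MIO `Q_o`. -/
noncomputable def Omega (o : Set A) (S : MIO A) (ho : o ⊆ S.out) : MIO (A ⊕ A) :=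
  syncComp (rename (tagged o) (tagged_injective o) S) (queueMIO o) (omega_composable o S ho)

/-- The outputs of `S` that are inputs of `T`. -/
def oOf (S T : MIO A) : Set A := S.out ∩ T.inp

/-- `Ω_{o_S}(S)` where `o_S = out_S ∩ in_T`. -/
noncomputable def OmegaC (S T : MIO A) : MIO (A ⊕ A) :=
  Omega (oOf S T) S Set.inter_subset_left

/-- Composability of the queue-extended MIOs, i.e. definedness of `S ⊗_as T`. -/
def AsyncComposable (S T : MIO A) : Prop := Composable (OmegaC S T) (OmegaC T S)

/-- Asynchronous composition `S ⊗_as T = Ω_{o_S}(S) ⊗_sy Ω_{o_T}(T)`. -/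
noncomputable def asyncComp (S T : MIO A) (h : AsyncComposable S T) : MIO (A ⊕ A) :=
  syncComp (OmegaC S T) (OmegaC T S) h

/-- Asynchronous modal compatibility `S ⇄_ac T`. -/
def AsyncCompat (S T : MIO A) : Prop :=
  Composable S T ∧ WeakCompat (OmegaC S T) (OmegaC T S)

theorem actEq {S T : MIO A} (h : SigEq S T) : S.act = T.act := by
  obtain ⟨h1, h2, h3⟩ := h; simp [act, h1, h2, h3]

theorem intl_not_shared_left {S T : MIO A} (h : Composable S T) {b : A}
    (hb : b ∈ S.intl) : b ∉ shared S T := by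
  intro hsh
  rcases h hsh with ⟨h1, _⟩ | ⟨_, h2⟩
  · exact S.inp_intl b h1 hb
  · exact S.out_intl b h2 hb

theorem intl_not_shared_right {S T : MIO A} (h : Composable S T) {b : A}
    (hb : b ∈ T.intl) : b ∉ shared S T := by
  intro hsh
  rcases h hsh with ⟨_, h2⟩ | ⟨h1, _⟩
  · exact T.out_intl b h2 hb
  · exact T.inp_intl b h1 hb

theorem intl_mem_act {S : MIO A} {b : A} (hb : b ∈ S.intl) : b ∈ S.act :=
  Set.mem_union_right _ hb

theorem liftL_tauMustStar {S T : MIO A} (h : Composable S T) {s s' : S.State}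
    (t : T.State) (hst : S.tauMustStar s s') :
    (syncComp S T h).tauMustStar (s, t) (s', t) := by
  refine Relation.ReflTransGen.lift (fun x => (x, t)) (fun a b hab => ?_) _ _ hst
  obtain ⟨c, hc, hm⟩ := hab
  exact ⟨c, Or.inl (Or.inl hc),
    Or.inr (Or.inl ⟨intl_mem_act hc, intl_not_shared_left h hc, hm, rfl⟩)⟩

theorem liftR_tauMustStar {S T : MIO A} (h : Composable S T) {t t' : T.State}
    (s : S.State) (hst : T.tauMustStar t t') :
    (syncComp S T h).tauMustStar (s, t) (s, t') := by
  refine Relation.ReflTransGen.lift (fun x => (s, x)) (fun a b hab => ?_) _ _ hst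
  obtain ⟨c, hc, hm⟩ := hab
  exact ⟨c, Or.inl (Or.inr hc),
    Or.inr (Or.inr ⟨intl_mem_act hc, intl_not_shared_right h hc, hm, rfl⟩)⟩

theorem liftL_tauMayStar {S T : MIO A} (h : Composable S T) {s s' : S.State}
    (t : T.State) (hst : S.tauMayStar s s') :
    (syncComp S T h).tauMayStar (s, t) (s', t) := by
  refine Relation.ReflTransGen.lift (fun x => (x, t)) (fun a b hab => ?_) _ _ hst
  obtain ⟨c, hc, hm⟩ := hab
  exact ⟨c, Or.inl (Or.inl hc),
    Or.inr (Or.inl ⟨intl_mem_act hc, intl_not_shared_left h hc, hm, rfl⟩)⟩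

theorem liftR_tauMayStar {S T : MIO A} (h : Composable S T) {t t' : T.State}
    (s : S.State) (hst : T.tauMayStar t t') :
    (syncComp S T h).tauMayStar (s, t) (s, t') := by
  refine Relation.ReflTransGen.lift (fun x => (s, x)) (fun a b hab => ?_) _ _ hst
  obtain ⟨c, hc, hm⟩ := hab
  exact ⟨c, Or.inl (Or.inr hc),
    Or.inr (Or.inr ⟨intl_mem_act hc, intl_not_shared_right h hc, hm, rfl⟩)⟩

end MIO

open MIO

/-- Weak modal refinement is compositional w.r.t. synchronous composition. -/
theorem weakRefines_compositional (A : Type) (S S' T T' : MIO A)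
    (hS : WeakRefines S' S) (hT : WeakRefines T' T) (h : Composable S T) :
    Composable S' T' ∧
    ∀ h' : Composable S' T', WeakRefines (syncComp S' T' h') (syncComp S T h) := by
  obtain ⟨sigS, RS, RS0, hRS⟩ := hS
  obtain ⟨sigT, RT, RT0, hRT⟩ := hT
  have hactS : S'.act = S.act := actEq sigS
  have hactT : T'.act = T.act := actEq sigT
  have hshared : shared S' T' = shared S T := by
    simp [shared, hactS, hactT]
  have hcomp : Composable S' T' := by
    unfold Composable
    rw [hshared, sigS.1, sigS.2.1, sigT.1, sigT.2.1]
    exact h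
  refine ⟨hcomp, fun h' => ?_⟩
  constructor
  · exact ⟨by simp [syncComp, hshared, sigS.1, sigT.1],
      by simp [syncComp, hshared, sigS.2.1, sigT.2.1],
      by simp [syncComp, hshared, sigS.2.2, sigT.2.2]⟩
  refine ⟨fun p q => RS p.1 q.1 ∧ RT p.2 q.2, ⟨RS0, RT0⟩, ?_⟩
  rintro ⟨s, t⟩ ⟨σ, τ⟩ ⟨hs, ht⟩
  obtain ⟨mustVisS, mustIntS, mayVisS, mayIntS⟩ := hRS s σ hs
  obtain ⟨mustVisT, mustIntT, mayVisT, mayIntT⟩ := hRT t τ ht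
  refine ⟨?_, ?_, ?_, ?_⟩
  · -- visible must of abstract composite
    rintro a ha ⟨σ', τ'⟩ hmust
    have hnsh : a ∉ shared S T := by
      rcases ha with ha | ha
      · exact ha.2
      · exact ha.2
    rcases hmust with ⟨hsh, _, _⟩ | ⟨haS, _, hm, heq⟩ | ⟨haT, _, hm, heq⟩
    · exact absurd hsh hnsh
    · -- S-local
      have havis : a ∈ S.inp ∪ S.out := by
        rcases ha with ⟨ha1, _⟩ | ⟨ha1, _⟩
        · rcases ha1 with ha1 | ha1
          · exact Or.inl ha1
          · exact absurd ⟨haS, Or.inl (Or.inl ha1)⟩ hnsh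
        · rcases ha1 with ha1 | ha1
          · exact Or.inr ha1
          · exact absurd ⟨haS, Or.inl (Or.inr ha1)⟩ hnsh
      obtain ⟨s1, s2, s3, hc1, hm1, hc2, hR⟩ := mustVisS a havis σ' hm
      refine ⟨(s1, t), (s2, t), (s3, t), liftL_tauMustStar h' t hc1,
        Or.inr (Or.inl ⟨hactS ▸ haS, hshared ▸ hnsh, hm1, rfl⟩),
        liftL_tauMustStar h' t hc2, hR, heq ▸ ht⟩
    · -- T-local
      have havis : a ∈ T.inp ∪ T.out := by
        rcases ha with ⟨ha1, _⟩ | ⟨ha1, _⟩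
        · rcases ha1 with ha1 | ha1
          · exact absurd ⟨Or.inl (Or.inl ha1), haT⟩ hnsh
          · exact Or.inl ha1
        · rcases ha1 with ha1 | ha1
          · exact absurd ⟨Or.inl (Or.inr ha1), haT⟩ hnsh
          · exact Or.inr ha1
      obtain ⟨t1, t2, t3, hc1, hm1, hc2, hR⟩ := mustVisT a havis τ' hm
      refine ⟨(s, t1), (s, t2), (s, t3), liftR_tauMustStar h' s hc1,
        Or.inr (Or.inr ⟨hactT ▸ haT, hshared ▸ hnsh, hm1, rfl⟩),
        liftR_tauMustStar h' s hc2, heq ▸ hs, hR⟩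
  · -- internal must of abstract composite
    rintro a ha ⟨σ', τ'⟩ hmust
    rcases hmust with ⟨hsh, hmS, hmT⟩ | ⟨haS, hnsh, hm, heq⟩ | ⟨haT, hnsh, hm, heq⟩
    · -- shared (synchronizing) must
      have hvS : a ∈ S.inp ∪ S.out := by
        rcases h hsh with ⟨h1, _⟩ | ⟨_, h2⟩
        · exact Or.inl h1
        · exact Or.inr h2
      have hvT : a ∈ T.inp ∪ T.out := by
        rcases h hsh with ⟨_, h2⟩ | ⟨h1, _⟩
        · exact Or.inr h2
        · exact Or.inl h1
      obtain ⟨s1, s2, s3, hcS1, hmS1, hcS2, hRS'⟩ := mustVisS a hvS σ' hmS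
      obtain ⟨t1, t2, t3, hcT1, hmT1, hcT2, hRT'⟩ := mustVisT a hvT τ' hmT
      refine ⟨(s3, t3), ?_, hRS', hRT'⟩
      have step : (syncComp S' T' h').tauMust (s1, t1) (s2, t2) :=
        ⟨a, Or.inr (hshared ▸ hsh), Or.inl ⟨hshared ▸ hsh, hmS1, hmT1⟩⟩
      exact ((liftL_tauMustStar h' t hcS1).trans
        ((liftR_tauMustStar h' s1 hcT1).trans
          ((Relation.ReflTransGen.single step).trans
            ((liftL_tauMustStar h' t2 hcS2).trans (liftR_tauMustStar h' s3 hcT2)))))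
    · -- S-local, a internal
      have haint : a ∈ S.intl := by
        rcases ha with (ha | ha) | ha
        · exact ha
        · exact absurd ⟨haS, intl_mem_act ha⟩ hnsh
        · exact absurd ha hnsh
      obtain ⟨s1, hc, hR⟩ := mustIntS a haint σ' hm
      exact ⟨(s1, t), liftL_tauMustStar h' t hc, hR, heq ▸ ht⟩
    · -- T-local, a internal
      have haint : a ∈ T.intl := by
        rcases ha with (ha | ha) | ha
        · exact absurd ⟨intl_mem_act ha, haT⟩ hnsh
        · exact ha
        · exact absurd ha hnsh
      obtain ⟨t1, hc, hR⟩ := mustIntT a haint τ' hm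
      exact ⟨(s, t1), liftR_tauMustStar h' s hc, heq ▸ hs, hR⟩
  · -- visible may of concrete composite
    rintro a ha ⟨s', t'⟩ hmay
    have hnsh : a ∉ shared S' T' := by
      rcases ha with ha | ha
      · exact ha.2
      · exact ha.2
    rcases hmay with ⟨hsh, _, _⟩ | ⟨haS, _, hm, heq⟩ | ⟨haT, _, hm, heq⟩
    · exact absurd hsh hnsh
    · have havis : a ∈ S'.inp ∪ S'.out := by
        rcases ha with ⟨ha1, _⟩ | ⟨ha1, _⟩
        · rcases ha1 with ha1 | ha1
          · exact Or.inl ha1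
          · exact absurd ⟨haS, Or.inl (Or.inl ha1)⟩ hnsh
        · rcases ha1 with ha1 | ha1
          · exact Or.inr ha1
          · exact absurd ⟨haS, Or.inl (Or.inr ha1)⟩ hnsh
      obtain ⟨σ1, σ2, σ3, hc1, hm1, hc2, hR⟩ := mayVisS a havis s' hm
      refine ⟨(σ1, τ), (σ2, τ), (σ3, τ), liftL_tauMayStar h τ hc1,
        Or.inr (Or.inl ⟨hactS ▸ haS, hshared ▸ hnsh, hm1, rfl⟩),
        liftL_tauMayStar h τ hc2, hR, heq ▸ ht⟩
    · have havis : a ∈ T'.inp ∪ T'.out := by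
        rcases ha with ⟨ha1, _⟩ | ⟨ha1, _⟩
        · rcases ha1 with ha1 | ha1
          · exact absurd ⟨Or.inl (Or.inl ha1), haT⟩ hnsh
          · exact Or.inl ha1
        · rcases ha1 with ha1 | ha1
          · exact absurd ⟨Or.inl (Or.inr ha1), haT⟩ hnsh
          · exact Or.inr ha1
      obtain ⟨τ1, τ2, τ3, hc1, hm1, hc2, hR⟩ := mayVisT a havis t' hm
      refine ⟨(σ, τ1), (σ, τ2), (σ, τ3), liftR_tauMayStar h σ hc1,
        Or.inr (Or.inr ⟨hactT ▸ haT, hshared ▸ hnsh, hm1, rfl⟩),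
        liftR_tauMayStar h σ hc2, heq ▸ hs, hR⟩
  · -- internal may of concrete composite
    rintro a ha ⟨s', t'⟩ hmay
    rcases hmay with ⟨hsh, hmS, hmT⟩ | ⟨haS, hnsh, hm, heq⟩ | ⟨haT, hnsh, hm, heq⟩
    · have hsh' : a ∈ shared S T := hshared ▸ hsh
      have hvS : a ∈ S'.inp ∪ S'.out := by
        rw [sigS.1, sigS.2.1]
        rcases h hsh' with ⟨h1, _⟩ | ⟨_, h2⟩
        · exact Or.inl h1
        · exact Or.inr h2
      have hvT : a ∈ T'.inp ∪ T'.out := by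
        rw [sigT.1, sigT.2.1]
        rcases h hsh' with ⟨_, h2⟩ | ⟨h1, _⟩
        · exact Or.inr h2
        · exact Or.inl h1
      obtain ⟨σ1, σ2, σ3, hcS1, hmS1, hcS2, hRS'⟩ := mayVisS a hvS s' hmS
      obtain ⟨τ1, τ2, τ3, hcT1, hmT1, hcT2, hRT'⟩ := mayVisT a hvT t' hmT
      refine ⟨(σ3, τ3), ?_, hRS', hRT'⟩
      have step : (syncComp S T h).tauMay (σ1, τ1) (σ2, τ2) :=
        ⟨a, Or.inr hsh', Or.inl ⟨hsh', hmS1, hmT1⟩⟩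
      exact ((liftL_tauMayStar h τ hcS1).trans
        ((liftR_tauMayStar h σ1 hcT1).trans
          ((Relation.ReflTransGen.single step).trans
            ((liftL_tauMayStar h τ2 hcS2).trans (liftR_tauMayStar h σ3 hcT2)))))
    · have haint : a ∈ S'.intl := by
        rcases ha with (ha | ha) | ha
        · exact ha
        · exact absurd ⟨haS, intl_mem_act ha⟩ hnsh
        · exact absurd ha hnsh
      obtain ⟨σ1, hc, hR⟩ := mayIntS a haint s' hm
      exact ⟨(σ1, τ), liftL_tauMayStar h τ hc, hR, heq ▸ ht⟩
    · have haint : a ∈ T'.intl := by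
        rcases ha with (ha | ha) | ha
        · exact absurd ⟨intl_mem_act ha, haT⟩ hnsh
        · exact ha
        · exact absurd ha hnsh
      obtain ⟨τ1, hc, hR⟩ := mayIntT a haint t' hm
      exact ⟨(σ, τ1), liftR_tauMayStar h σ hc, heq ▸ hs, hR⟩
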